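/- If the function w ↦ V(w) giving expected voting power as a function of weight satisfies V(w) = V(x·w) + V((1−x)·w) for all weights w > 0 and all x ∈ (0,1) (robustness to splitting and merging), and the total weight is normalized so that Σ w_i = 1 forces V to be additive with V(1) = 1, then V(w) = w for all w ∈ (0,1]. -/

import Mathlib

/-- if V : (0,1] → ℝ satisfies V(w) = V(xw) + V((1−x)w) for all w ∈ (0,1] and
x ∈ (0,1), is monotone on (0,1], and V(1) = 1, then V(w) = w on (0,1]. -/
theorem stmt_17 (V : ℝ → ℝ)
    (hsplit : ∀ w ∈ Set.Ioc (0:ℝ) 1, ∀ x ∈ Set.Ioo (0:ℝ) 1,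
      V w = V (x * w) + V ((1 - x) * w))
    (hmono : MonotoneOn V (Set.Ioc (0:ℝ) 1))
    (hV1 : V 1 = 1) :
    ∀ w ∈ Set.Ioc (0:ℝ) 1, V w = w := by
  -- additivity
  have hadd : ∀ a b : ℝ, 0 < a → 0 < b → a + b ≤ 1 → V (a + b) = V a + V b := by
    intro a b ha hb hab
    have hab0 : 0 < a + b := by linarith
    have hx : a / (a + b) ∈ Set.Ioo (0:ℝ) 1 := by
      constructor
      · positivity
      · rw [div_lt_one hab0]; linarith
    have h := hsplit (a + b) ⟨hab0, hab⟩ _ hx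
    have e1 : a / (a + b) * (a + b) = a := by field_simp
    have e2 : (1 - a / (a + b)) * (a + b) = b := by field_simp; ring
    rw [e1, e2] at h
    exact h
  have hnat : ∀ n : ℕ, ∀ a : ℝ, 0 < a → ((n:ℝ) + 1) * a ≤ 1 →
      V (((n:ℝ) + 1) * a) = ((n:ℝ) + 1) * V a := by
    intro n
    induction n with
    | zero => intro a ha h; norm_num
    | succ k ih =>
      intro a ha h
      have hle : ((k:ℝ) + 1) * a ≤ 1 := by
        have : ((k:ℝ) + 1) * a < ((k:ℝ) + 1 + 1) * a := by nlinarith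
        push_cast at h ⊢
        linarith
      have e : ((k:ℝ) + 1 + 1) * a = ((k:ℝ) + 1) * a + a := by ring
      push_cast
      rw [e, hadd _ _ (by positivity) ha (by rw [← e]; push_cast at h; exact h),
        ih a ha hle]
      ring
  -- V on rationals m/n
  have hfrac : ∀ m n : ℕ, 1 ≤ m → m ≤ n → V ((m:ℝ) / n) = (m:ℝ) / n := by
    intro m n hm hmn
    have hn : 1 ≤ n := le_trans hm hmn
    have hn0 : (0:ℝ) < n := by exact_mod_cast hn
    obtain ⟨k, rfl⟩ : ∃ k : ℕ, n = k + 1 := ⟨n - 1, (Nat.succ_pred_eq_of_pos hn).symm⟩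
    obtain ⟨j, rfl⟩ : ∃ j : ℕ, m = j + 1 := ⟨m - 1, (Nat.succ_pred_eq_of_pos hm).symm⟩
    have hinv : (0:ℝ) < 1 / ((k:ℝ) + 1) := by positivity
    have hone : ((k:ℝ) + 1) * (1 / ((k:ℝ) + 1)) = 1 := by field_simp
    have hVinv : V (1 / ((k:ℝ) + 1)) = 1 / ((k:ℝ) + 1) := by
      have := hnat k (1 / ((k:ℝ) + 1)) hinv (le_of_eq hone)
      rw [hone, hV1] at this
      field_simp at this ⊢
      linarith
    have hmle : ((j:ℝ) + 1) * (1 / ((k:ℝ) + 1)) ≤ 1 := by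
      rw [mul_one_div, div_le_one (by positivity)]
      exact_mod_cast hmn
    have := hnat j (1 / ((k:ℝ) + 1)) hinv hmle
    rw [hVinv] at this
    rw [mul_one_div] at this
    push_cast
    rw [this]
  -- V on rationals in (0,1]
  have hrat : ∀ r : ℚ, 0 < r → (r:ℝ) ≤ 1 → V ((r:ℝ)) = (r:ℝ) := by
    intro r hr hr1
    have hnum : 0 < r.num := Rat.num_pos.mpr hr
    have hcast : (r:ℝ) = (r.num.toNat : ℝ) / (r.den : ℝ) := by
      have e : ((r.num.toNat : ℕ) : ℝ) = (r.num : ℝ) := by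
        exact_mod_cast Int.toNat_of_nonneg hnum.le
      rw [Rat.cast_def, e]
    have hden0 : (0:ℝ) < (r.den : ℝ) := by exact_mod_cast r.pos
    have hmn : r.num.toNat ≤ r.den := by
      have : (r.num.toNat : ℝ) / (r.den : ℝ) ≤ 1 := by rw [← hcast]; exact hr1
      rw [div_le_one hden0] at this
      exact_mod_cast this
    have hm1 : 1 ≤ r.num.toNat := by omega
    rw [hcast]
    exact hfrac _ _ hm1 hmn
  -- squeeze
  intro w ⟨hw0, hw1⟩
  rcases eq_or_lt_of_le hw1 with h1 | h1
  · rw [h1, hV1]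
  by_contra hne
  rcases lt_or_gt_of_ne hne with hlt | hgt
  · -- V w < w : pick rational r with max (V w) 0 < r < w
    obtain ⟨r, hr1, hr2⟩ := exists_rat_btwn (max_lt hlt hw0 : max (V w) 0 < w)
    have hrpos : 0 < r := by
      have : (0:ℝ) < (r:ℝ) := lt_of_le_of_lt (le_max_right _ _) hr1
      exact_mod_cast this
    have hrle : (r:ℝ) ≤ 1 := le_of_lt (lt_trans hr2 h1)
    have := hmono ⟨by exact_mod_cast hrpos, hrle⟩ ⟨hw0, hw1⟩ hr2.le
    rw [hrat r hrpos hrle] at this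
    have := lt_of_le_of_lt this (lt_of_le_of_lt (le_max_left _ _) hr1)
    exact lt_irrefl _ this
  · -- w < V w : pick rational r with w < r < min (V w) 1
    obtain ⟨r, hr1, hr2⟩ := exists_rat_btwn (lt_min hgt h1 : w < min (V w) 1)
    have hrpos : 0 < r := by
      have : (0:ℝ) < (r:ℝ) := lt_trans hw0 hr1
      exact_mod_cast this
    have hrle : (r:ℝ) ≤ 1 := le_of_lt (lt_of_lt_of_le hr2 (min_le_right _ _))
    have := hmono ⟨hw0, hw1⟩ ⟨by exact_mod_cast hrpos, hrle⟩ hr1.le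
    rw [hrat r hrpos hrle] at this
    have := lt_of_le_of_lt this (lt_of_lt_of_le hr2 (min_le_left _ _))
    exact lt_irrefl _ this
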